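/- Let P = conv{p₀,p₁,p₂} with p₀,p₁,p₂ ∈ ℤ² the only integer points of P, and let Q = conv{q₀,q₁,q₂} be circumscribed about P with p_i = (1−x_i)q_{i+1} + x_i q_{i+2} and 0 < x_i < 1. Then the area of Q equals 1/(2·(x₀x₁x₂ + (1−x₀)(1−x₁)(1−x₂))). -/

import Mathlib

open MeasureTheory

noncomputable def dot2 (u x : ℝ × ℝ) : ℝ := u.1 * x.1 + u.2 * x.2

noncomputable def widthFn (K : Set (ℝ × ℝ)) (u : ℝ × ℝ) : ℝ :=
  sSup (dot2 u '' K) - sInf (dot2 u '' K)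

noncomputable def latticeWidth (K : Set (ℝ × ℝ)) : ℝ :=
  sInf {w | ∃ u : ℤ × ℤ, u ≠ 0 ∧ w = widthFn K ((u.1 : ℝ), (u.2 : ℝ))}

def IsLatticePoint (p : ℝ × ℝ) : Prop := ∃ z : ℤ × ℤ, p = ((z.1 : ℝ), (z.2 : ℝ))

def LatticeFree (K : Set (ℝ × ℝ)) : Prop := ∀ p ∈ interior K, ¬ IsLatticePoint p

def CentrallySymmetric (K : Set (ℝ × ℝ)) : Prop := ∃ c : ℝ × ℝ, ∀ x, x ∈ K ↔ (2 : ℝ) • c - x ∈ K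

def Covers (t : ℝ) (K : Set (ℝ × ℝ)) : Prop :=
  ∀ p : ℝ × ℝ, ∃ x ∈ K, ∃ z : ℤ × ℤ, p = t • x + ((z.1 : ℝ), (z.2 : ℝ))

noncomputable def mu2 (K : Set (ℝ × ℝ)) : ℝ := sInf {t : ℝ | 0 ≤ t ∧ Covers t K}

def MeetsAllLines (t : ℝ) (K : Set (ℝ × ℝ)) : Prop :=
  ∀ p v : ℝ × ℝ, v ≠ 0 → ∃ s : ℝ, ∃ x ∈ K, ∃ z : ℤ × ℤ,
    p + s • v = t • x + ((z.1 : ℝ), (z.2 : ℝ))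

noncomputable def mu1 (K : Set (ℝ × ℝ)) : ℝ := sInf {t : ℝ | 0 ≤ t ∧ MeetsAllLines t K}


lemma line_vert (c : ℝ) : volume {z : ℝ × ℝ | z.1 = c} = 0 := by
  have h : {z : ℝ × ℝ | z.1 = c} = ({c} : Set ℝ) ×ˢ (Set.univ : Set ℝ) := by
    ext z
    simp only [Set.mem_setOf_eq, Set.mem_prod, Set.mem_singleton_iff, Set.mem_univ, and_true]
  rw [h, Measure.volume_eq_prod, Measure.prod_prod]; simp

lemma line_horiz (c : ℝ) : volume {z : ℝ × ℝ | z.2 = c} = 0 := by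
  have h : {z : ℝ × ℝ | z.2 = c} = (Set.univ : Set ℝ) ×ˢ ({c} : Set ℝ) := by
    ext z
    simp only [Set.mem_setOf_eq, Set.mem_prod, Set.mem_singleton_iff, Set.mem_univ, true_and]
  rw [h, Measure.volume_eq_prod, Measure.prod_prod]; simp

noncomputable def Lsh : (ℝ × ℝ) →ₗ[ℝ] (ℝ × ℝ) :=
  Matrix.toLin (Module.Basis.finTwoProd ℝ) (Module.Basis.finTwoProd ℝ) !![1, 1; 0, 1]

lemma line_diag : volume {z : ℝ × ℝ | z.1 + z.2 = 1} = 0 := by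
  have hdet : LinearMap.det Lsh = 1 := by
    rw [Lsh, LinearMap.det_toLin, Matrix.det_fin_two]; norm_num
  have happ : ∀ z : ℝ × ℝ, Lsh z = (z.1 + z.2, z.2) := by
    intro z
    have hz : z = z.1 • ((1:ℝ),(0:ℝ)) + z.2 • ((0:ℝ),(1:ℝ)) := by simp [Prod.ext_iff]
    rw [hz]; simp [Lsh, Matrix.toLin_apply, Prod.ext_iff]
  have h : {z : ℝ × ℝ | z.1 + z.2 = 1} = Lsh ⁻¹' {z : ℝ × ℝ | z.1 = 1} := by
    ext z; simp [happ]
  rw [h, Measure.addHaar_preimage_linearMap volume (by rw [hdet]; norm_num)]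
  rw [line_vert]; simp

lemma range_fin3 {α : Type*} (f : Fin 3 → α) : Set.range f = {f 0, f 1, f 2} := by
  ext y
  constructor
  · rintro ⟨i, rfl⟩; fin_cases i <;> simp
  · rintro (h | h | h) <;> exact ⟨_, h.symm⟩

lemma mem_hull3 {E : Type*} [AddCommGroup E] [Module ℝ E] (p : Fin 3 → E) (w : Fin 3 → ℝ)
    (hw : ∀ i, 0 ≤ w i) (hsum : w 0 + w 1 + w 2 = 1) :
    w 0 • p 0 + w 1 • p 1 + w 2 • p 2 ∈ convexHull ℝ (Set.range p) := by
  have hs : ∑ i : Fin 3, w i = 1 := by simp [Fin.sum_univ_three, hsum]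
  have := Finset.centerMass_mem_convexHull (s := Set.range p) (Finset.univ : Finset (Fin 3))
    (w := w) (z := p) (fun i _ => hw i) (by rw [hs]; norm_num) (fun i _ => Set.mem_range_self i)
  rwa [Finset.centerMass_eq_of_sum_1 _ _ hs, Fin.sum_univ_three] at this

lemma integral_helper :
    (∫ y in Set.Ioo (0:ℝ) 1, ((fun a : ℝ => (1:ℝ) - a) - (fun _ : ℝ => (0:ℝ))) y) = (1:ℝ)/2 := by
  have h1 : (∫ y in Set.Ioo (0:ℝ) 1, ((fun a : ℝ => (1:ℝ) - a) - (fun _ : ℝ => (0:ℝ))) y)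
      = ∫ y in Set.Ioc (0:ℝ) 1, (1 - y) := by
    rw [MeasureTheory.integral_Ioc_eq_integral_Ioo]
    simp
  rw [h1, ← intervalIntegral.integral_of_le (by norm_num : (0:ℝ) ≤ 1)]
  have h2 : (∫ y in (0:ℝ)..1, (1 - y)) = (∫ y in (0:ℝ)..1, (1:ℝ)) - ∫ y in (0:ℝ)..1, y := by
    rw [← intervalIntegral.integral_sub] <;> simp [intervalIntegrable_const]
  rw [h2]
  simp
  norm_num

def stdTri : Set (ℝ × ℝ) := {z : ℝ × ℝ | 0 ≤ z.1 ∧ 0 ≤ z.2 ∧ z.1 + z.2 ≤ 1}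

lemma stdTri_convex : Convex ℝ stdTri := by
  have h1 : Convex ℝ {z : ℝ × ℝ | 0 ≤ z.1} :=
    convex_halfSpace_ge (LinearMap.fst ℝ ℝ ℝ).isLinear 0
  have h2 : Convex ℝ {z : ℝ × ℝ | 0 ≤ z.2} :=
    convex_halfSpace_ge (LinearMap.snd ℝ ℝ ℝ).isLinear 0
  have h3 : Convex ℝ {z : ℝ × ℝ | z.1 + z.2 ≤ 1} :=
    convex_halfSpace_le ((LinearMap.fst ℝ ℝ ℝ) + (LinearMap.snd ℝ ℝ ℝ)).isLinear 1
  have : stdTri = ({z : ℝ × ℝ | 0 ≤ z.1} ∩ {z : ℝ × ℝ | 0 ≤ z.2}) ∩ {z : ℝ × ℝ | z.1 + z.2 ≤ 1} := by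
    ext z; simp [stdTri, and_assoc]
  rw [this]; exact (h1.inter h2).inter h3

lemma hull_eq_stdTri :
    convexHull ℝ (Set.range ![((0:ℝ),(0:ℝ)), (1,0), (0,1)]) = stdTri := by
  apply le_antisymm
  · apply convexHull_min _ stdTri_convex
    rintro y ⟨i, rfl⟩
    fin_cases i <;> simp [stdTri]
  · rintro z ⟨hz1, hz2, hz3⟩
    have := mem_hull3 ![((0:ℝ),(0:ℝ)), (1,0), (0,1)] ![1 - z.1 - z.2, z.1, z.2]
      (by intro i; fin_cases i <;> simp <;> linarith) (by simp; ring)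
    simpa [Prod.ext_iff] using this

lemma volume_stdTri : volume stdTri = ENNReal.ofReal (1/2) := by
  set U := regionBetween (fun _ : ℝ => (0:ℝ)) (fun a : ℝ => 1 - a) (Set.Ioo 0 1) with hU
  have hvolU : volume U = ENNReal.ofReal (1/2) := by
    rw [hU, Measure.volume_eq_prod, volume_regionBetween_eq_integral]
    · rw [integral_helper]
    · exact ((continuous_const (y := (0:ℝ))).continuousOn.integrableOn_compact
        (isCompact_Icc (a := (0:ℝ)) (b := 1))).mono_set Set.Ioo_subset_Icc_self
    · exact ((continuous_const.sub continuous_id).continuousOn.integrableOn_compact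
        (isCompact_Icc (a := (0:ℝ)) (b := 1))).mono_set Set.Ioo_subset_Icc_self
    · exact measurableSet_Ioo
    · intro a ha; simp at ha ⊢; linarith [ha.2]
  have hUsub : U ⊆ stdTri := by
    rintro z ⟨hz1, hz2⟩
    simp only [Set.mem_Ioo] at hz1 hz2
    exact ⟨hz1.1.le, hz2.1.le, by linarith [hz2.2]⟩
  have hsub : stdTri ⊆ U ∪ ({z : ℝ × ℝ | z.1 = 0} ∪ {z : ℝ × ℝ | z.2 = 0}
      ∪ {z : ℝ × ℝ | z.1 + z.2 = 1}) := by
    rintro z ⟨hz1, hz2, hz3⟩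
    rcases eq_or_lt_of_le hz1 with h1 | h1
    · exact Or.inr (Or.inl (Or.inl h1.symm))
    rcases eq_or_lt_of_le hz2 with h2 | h2
    · exact Or.inr (Or.inl (Or.inr h2.symm))
    rcases eq_or_lt_of_le hz3 with h3 | h3
    · exact Or.inr (Or.inr h3)
    exact Or.inl ⟨⟨h1, by linarith⟩, ⟨h2, by simpa using (by linarith : z.2 < 1 - z.1)⟩⟩
  refine le_antisymm ?_ ?_
  · calc volume stdTri ≤ volume U + volume ({z : ℝ × ℝ | z.1 = 0} ∪ {z : ℝ × ℝ | z.2 = 0}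
        ∪ {z : ℝ × ℝ | z.1 + z.2 = 1}) := (measure_mono hsub).trans (measure_union_le _ _)
    _ ≤ volume U + (volume ({z : ℝ × ℝ | z.1 = 0} ∪ {z : ℝ × ℝ | z.2 = 0})
        + volume {z : ℝ × ℝ | z.1 + z.2 = 1}) := by
        gcongr; exact measure_union_le _ _
    _ ≤ volume U + ((volume {z : ℝ × ℝ | z.1 = 0} + volume {z : ℝ × ℝ | z.2 = 0})
        + volume {z : ℝ × ℝ | z.1 + z.2 = 1}) := by
        gcongr; exact measure_union_le _ _
    _ = ENNReal.ofReal (1/2) := by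
        rw [hvolU, line_vert, line_horiz, line_diag]; simp
  · rw [← hvolU]; exact measure_mono hUsub

open Pointwise in
noncomputable def cross (u v : ℝ × ℝ) : ℝ := u.1 * v.2 - u.2 * v.1

noncomputable def Lmap (u v : ℝ × ℝ) : (ℝ × ℝ) →ₗ[ℝ] (ℝ × ℝ) :=
  Matrix.toLin (Module.Basis.finTwoProd ℝ) (Module.Basis.finTwoProd ℝ) !![u.1, v.1; u.2, v.2]

lemma Lmap_apply (u v z : ℝ × ℝ) : Lmap u v z = z.1 • u + z.2 • v := by
  have hz : z = z.1 • ((1:ℝ),(0:ℝ)) + z.2 • ((0:ℝ),(1:ℝ)) := by simp [Prod.ext_iff]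
  rw [hz]
  simp only [map_add, _root_.map_smul, Lmap, Matrix.toLin_apply, Prod.ext_iff]
  norm_num [Module.Basis.finTwoProd, Matrix.mulVec, dotProduct, Fin.sum_univ_two, Prod.ext_iff,
    mul_comm]

lemma Lmap_det (u v : ℝ × ℝ) : LinearMap.det (Lmap u v) = cross u v := by
  rw [Lmap, LinearMap.det_toLin, Matrix.det_fin_two]; simp [cross]; ring

open Pointwise in
lemma volume_triangle (q : Fin 3 → ℝ × ℝ) :
    volume (convexHull ℝ (Set.range q))
      = ENNReal.ofReal (|cross (q 1 - q 0) (q 2 - q 0)| / 2) := by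
  set L := Lmap (q 1 - q 0) (q 2 - q 0) with hL
  set g : (ℝ × ℝ) →ᵃ[ℝ] (ℝ × ℝ) := AffineMap.const ℝ (ℝ × ℝ) (q 0) + L.toAffineMap with hg
  have hgapp : ∀ z, g z = q 0 + L z := fun z => rfl
  have himg : g '' (convexHull ℝ (Set.range ![((0:ℝ),(0:ℝ)), (1,0), (0,1)]))
      = convexHull ℝ (Set.range q) := by
    rw [AffineMap.image_convexHull]
    congr 1
    rw [range_fin3, range_fin3]
    simp only [Set.image_insert_eq, Set.image_singleton, hgapp, hL, Lmap_apply]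
    norm_num [Matrix.cons_val_two]
  rw [← himg]
  have h2 : g '' (convexHull ℝ (Set.range ![((0:ℝ),(0:ℝ)), (1,0), (0,1)]))
      = q 0 +ᵥ (L '' (convexHull ℝ (Set.range ![((0:ℝ),(0:ℝ)), (1,0), (0,1)]))) := by
    rw [← Set.image_vadd, ← Set.image_comp]
    rfl
  rw [h2, measure_vadd, Measure.addHaar_image_linearMap, hL, Lmap_det, hull_eq_stdTri,
    volume_stdTri, ← ENNReal.ofReal_mul (abs_nonneg _), mul_one_div]

lemma combo_zero {v1 v2 : ℝ × ℝ} (h : cross v1 v2 ≠ 0) {a b : ℝ}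
    (hab : a • v1 + b • v2 = 0) : a = 0 ∧ b = 0 := by
  have h1 : a * v1.1 + b * v2.1 = 0 := congrArg Prod.fst hab
  have h2 : a * v1.2 + b * v2.2 = 0 := congrArg Prod.snd hab
  have ha : a * cross v1 v2 = 0 := by simp only [cross]; linear_combination v2.2 * h1 - v2.1 * h2
  have hb : b * cross v1 v2 = 0 := by simp only [cross]; linear_combination v1.1 * h2 - v1.2 * h1
  exact ⟨by rcases mul_eq_zero.1 ha with h' | h'; exact h'; exact absurd h' h,
    by rcases mul_eq_zero.1 hb with h' | h'; exact h'; exact absurd h' h⟩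

lemma cross_ne_zero_of_affineIndependent {p : Fin 3 → ℝ × ℝ}
    (haff : AffineIndependent ℝ p) : cross (p 1 - p 0) (p 2 - p 0) ≠ 0 := by
  intro hc
  set v1 := p 1 - p 0 with hv1
  set v2 := p 2 - p 0 with hv2
  -- find nontrivial (a, b) with a • v1 + b • v2 = 0
  have hdep : ∃ a b : ℝ, (a ≠ 0 ∨ b ≠ 0) ∧ a • v1 + b • v2 = 0 := by
    by_cases h11 : v1.1 ≠ 0
    · exact ⟨v2.1, -v1.1, Or.inr (neg_ne_zero.2 h11), by
        simp only [cross] at hc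
        simp only [Prod.ext_iff, Prod.fst_add, Prod.snd_add, Prod.smul_fst, Prod.smul_snd,
          smul_eq_mul, Prod.fst_zero, Prod.snd_zero]
        constructor <;> nlinarith [hc]⟩
    · by_cases h12 : v1.2 ≠ 0
      · exact ⟨v2.2, -v1.2, Or.inr (neg_ne_zero.2 h12), by
          push_neg at h11
          simp only [cross] at hc
          simp only [Prod.ext_iff, Prod.fst_add, Prod.snd_add, Prod.smul_fst, Prod.smul_snd,
            smul_eq_mul, Prod.fst_zero, Prod.snd_zero]
          constructor <;> nlinarith [hc]⟩
      · push_neg at h11 h12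
        exact ⟨1, 0, Or.inl one_ne_zero, by
          simp [Prod.ext_iff, h11, h12]⟩
  obtain ⟨a, b, hab0, hab⟩ := hdep
  set w : Fin 3 → ℝ := ![-(a + b), a, b] with hw
  have hsum : ∑ i, w i = 0 := by simp [hw, Fin.sum_univ_three]
  have hcomb : Finset.univ.weightedVSub p w = (0 : ℝ × ℝ) := by
    rw [Finset.weightedVSub_eq_linear_combination _ hsum]
    rw [Fin.sum_univ_three]
    show -(a + b) • p 0 + a • p 1 + b • p 2 = 0
    have : a • v1 + b • v2 = -(a + b) • p 0 + a • p 1 + b • p 2 := by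
      rw [hv1, hv2]; module
    rw [← this, hab]
  have := (affineIndependent_iff_of_fintype ℝ p).1 haff w hsum hcomb
  rcases hab0 with h | h
  · exact h (this 1)
  · exact h (this 2)

lemma fract_div_ne_zero {D m : ℤ} (hD : D ≠ 0) (h : ¬ D ∣ m) :
    Int.fract ((m:ℝ)/(D:ℝ)) ≠ 0 := by
  intro h0
  apply h
  refine ⟨⌊(m:ℝ)/(D:ℝ)⌋, ?_⟩
  have hDR : (D:ℝ) ≠ 0 := Int.cast_ne_zero.2 hD
  have hx : (m:ℝ)/(D:ℝ) = (⌊(m:ℝ)/(D:ℝ)⌋ : ℝ) := by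
    have := sub_eq_zero.1 h0
    linarith [this]
  have : (m:ℝ) = ((D * ⌊(m:ℝ)/(D:ℝ)⌋ : ℤ) : ℝ) := by
    push_cast
    field_simp at hx
    linarith [hx]
  exact_mod_cast this

lemma abs_cross_eq_one (p : Fin 3 → ℝ × ℝ) (hpz : ∀ i, IsLatticePoint (p i))
    (hcross : cross (p 1 - p 0) (p 2 - p 0) ≠ 0)
    (honly : ∀ y ∈ convexHull ℝ (Set.range p), IsLatticePoint y → ∃ i, y = p i) :
    |cross (p 1 - p 0) (p 2 - p 0)| = 1 := by
  obtain ⟨z0, hz0⟩ := hpz 0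
  obtain ⟨z1, hz1⟩ := hpz 1
  obtain ⟨z2, hz2⟩ := hpz 2
  set v1 := p 1 - p 0 with hv1def
  set v2 := p 2 - p 0 with hv2def
  set A : ℤ × ℤ := z1 - z0 with hA
  set B : ℤ × ℤ := z2 - z0 with hB
  have hv1 : v1 = ((A.1 : ℝ), (A.2 : ℝ)) := by
    rw [hv1def, hz0, hz1, hA]; simp [Prod.ext_iff]
  have hv2 : v2 = ((B.1 : ℝ), (B.2 : ℝ)) := by
    rw [hv2def, hz0, hz2, hB]; simp [Prod.ext_iff]
  set D : ℤ := A.1 * B.2 - A.2 * B.1 with hD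
  have hcd : cross v1 v2 = (D : ℝ) := by
    rw [hv1, hv2, hD]; simp [cross]
  have hD0 : D ≠ 0 := by
    intro h; exact hcross (by rw [hcd, h, Int.cast_zero])
  -- main claim
  have hnat : D.natAbs = 1 := by
    by_contra hne
    have h2 : 2 ≤ D.natAbs := by
      have h0 : D.natAbs ≠ 0 := fun h => hD0 (Int.natAbs_eq_zero.1 h)
      omega
    -- find c with a non-divisible cofactor
    have hc : ∃ c : ℤ × ℤ, ¬ (D ∣ c.1 * B.2 - c.2 * B.1) ∨ ¬ (D ∣ A.1 * c.2 - A.2 * c.1) := by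
      by_contra hall
      push_neg at hall
      have hB2 := (hall (1, 0)).1
      have hA2 := (hall (1, 0)).2
      have hB1 := (hall (0, 1)).1
      have hA1 := (hall (0, 1)).2
      simp at hB2 hA2 hB1 hA2 hA1
      have hdd : D * D ∣ D := by
        rw [hD]
        exact dvd_sub (mul_dvd_mul hA1 hB2) (mul_dvd_mul hA2 hB1)
      have h1 : D ∣ 1 := by
        obtain ⟨k, hk⟩ := hdd
        exact ⟨k, mul_left_cancel₀ hD0 (by rw [mul_one, ← mul_assoc]; exact hk)⟩
      have := Int.isUnit_iff.1 (isUnit_of_dvd_one h1)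
      rcases this with h | h <;> rw [h] at h2 <;> simp at h2
    obtain ⟨c, hcdvd⟩ := hc
    set m : ℤ := c.1 * B.2 - c.2 * B.1 with hm
    set n : ℤ := A.1 * c.2 - A.2 * c.1 with hn
    set α : ℝ := (m : ℝ) / (D : ℝ) with hαdef
    set β : ℝ := (n : ℝ) / (D : ℝ) with hβdef
    have hDR : (D : ℝ) ≠ 0 := Int.cast_ne_zero.2 hD0
    have hkey1 : α * A.1 + β * B.1 = c.1 := by
      rw [hαdef, hβdef]
      field_simp
      push_cast [hm, hn, hD]
      ring
    have hkey2 : α * A.2 + β * B.2 = c.2 := by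
      rw [hαdef, hβdef]
      field_simp
      push_cast [hm, hn, hD]
      ring
    set α' : ℝ := Int.fract α with hα'
    set β' : ℝ := Int.fract β with hβ'
    have hα'0 : 0 ≤ α' := Int.fract_nonneg α
    have hβ'0 : 0 ≤ β' := Int.fract_nonneg β
    have hα'1 : α' < 1 := Int.fract_lt_one α
    have hβ'1 : β' < 1 := Int.fract_lt_one β
    have hne0 : α' ≠ 0 ∨ β' ≠ 0 := by
      rcases hcdvd with h | h
      · exact Or.inl (fract_div_ne_zero hD0 h)
      · exact Or.inr (fract_div_ne_zero hD0 h)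
    have hfa : α' = α - (⌊α⌋ : ℝ) := rfl
    have hfb : β' = β - (⌊β⌋ : ℝ) := rfl
    have hp0 : p 0 = ((z0.1 : ℝ), (z0.2 : ℝ)) := hz0
    rcases le_or_gt (α' + β') 1 with hcase | hcase
    · -- w = p 0 + α' • v1 + β' • v2
      set w : ℝ × ℝ := p 0 + α' • v1 + β' • v2 with hw
      have hlat : IsLatticePoint w := by
        refine ⟨z0 + c - ⌊α⌋ • A - ⌊β⌋ • B, ?_⟩
        rw [hw, hp0, hv1, hv2]
        simp only [Prod.ext_iff, Prod.fst_add, Prod.snd_add, Prod.smul_fst, Prod.smul_snd,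
          Prod.fst_sub, Prod.snd_sub, smul_eq_mul]
        push_cast
        constructor
        · rw [hfa, hfb]; linear_combination hkey1
        · rw [hfa, hfb]; linear_combination hkey2
      have hmem : w ∈ convexHull ℝ (Set.range p) := by
        have hcomb := mem_hull3 p ![1 - α' - β', α', β']
          (by
            intro i; fin_cases i <;> simp
            · linarith
            · exact hα'0
            · exact hβ'0)
          (by simp only [Matrix.cons_val_zero, Matrix.cons_val_one, Matrix.head_cons,
            Matrix.cons_val_two, Matrix.tail_cons]; ring)
        have heq : (1 - α' - β') • p 0 + α' • p 1 + β' • p 2 = w := by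
          rw [hw, hv1def, hv2def]; module
        rw [← heq]
        simpa using hcomb
      obtain ⟨i, hi⟩ := honly w hmem hlat
      fin_cases i <;>
        [replace hi : w = p 0 := hi; replace hi : w = p 1 := hi; replace hi : w = p 2 := hi]
      · have h0 : α' • v1 + β' • v2 = 0 := by
          have := hi
          rw [hw] at this
          have h' : p 0 + (α' • v1 + β' • v2) = p 0 + 0 := by rw [add_zero, ← add_assoc]; exact this
          exact add_left_cancel h'
        obtain ⟨ha, hb⟩ := combo_zero hcross h0
        rcases hne0 with h | h <;> [exact h ha; exact h hb]
      · have h0 : (α' - 1) • v1 + β' • v2 = 0 := by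
          have := hi
          rw [hw] at this
          have h' : (α' - 1) • v1 + β' • v2 = (p 0 + α' • v1 + β' • v2) - p 1 := by
            rw [hv1def, hv2def]; module
          rw [h', this, sub_self]
        obtain ⟨ha, _⟩ := combo_zero hcross h0
        have : α' = 1 := by linarith [sub_eq_zero.1 ha]
        linarith
      · have h0 : α' • v1 + (β' - 1) • v2 = 0 := by
          have := hi
          rw [hw] at this
          have h' : α' • v1 + (β' - 1) • v2 = (p 0 + α' • v1 + β' • v2) - p 2 := by
            rw [hv1def, hv2def]; module
          rw [h', this, sub_self]
        obtain ⟨_, hb⟩ := combo_zero hcross h0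
        have : β' = 1 := by linarith [sub_eq_zero.1 hb]
        linarith
    · -- w = p 0 + (1 - α') • v1 + (1 - β') • v2
      set w : ℝ × ℝ := p 0 + (1 - α') • v1 + (1 - β') • v2 with hw
      have hlat : IsLatticePoint w := by
        refine ⟨z0 + A + B - c + ⌊α⌋ • A + ⌊β⌋ • B, ?_⟩
        rw [hw, hp0, hv1, hv2]
        simp only [Prod.ext_iff, Prod.fst_add, Prod.snd_add, Prod.smul_fst, Prod.smul_snd,
          Prod.fst_sub, Prod.snd_sub, smul_eq_mul]
        push_cast
        constructor
        · rw [hfa, hfb]; linear_combination -hkey1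
        · rw [hfa, hfb]; linear_combination -hkey2
      have hmem : w ∈ convexHull ℝ (Set.range p) := by
        have hcomb := mem_hull3 p ![α' + β' - 1, 1 - α', 1 - β']
          (by
            intro i; fin_cases i <;> simp
            · linarith
            · linarith
            · linarith)
          (by simp only [Matrix.cons_val_zero, Matrix.cons_val_one, Matrix.head_cons,
            Matrix.cons_val_two, Matrix.tail_cons]; ring)
        have heq : (α' + β' - 1) • p 0 + (1 - α') • p 1 + (1 - β') • p 2 = w := by
          rw [hw, hv1def, hv2def]; module
        rw [← heq]
        simpa using hcomb
      obtain ⟨i, hi⟩ := honly w hmem hlat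
      fin_cases i <;>
        [replace hi : w = p 0 := hi; replace hi : w = p 1 := hi; replace hi : w = p 2 := hi]
      · have h0 : (1 - α') • v1 + (1 - β') • v2 = 0 := by
          have := hi
          rw [hw] at this
          have h' : p 0 + ((1 - α') • v1 + (1 - β') • v2) = p 0 + 0 := by
            rw [add_zero, ← add_assoc]; exact this
          exact add_left_cancel h'
        obtain ⟨ha, _⟩ := combo_zero hcross h0
        linarith [sub_eq_zero.1 ha]
      · have h0 : (-α') • v1 + (1 - β') • v2 = 0 := by
          have := hi
          rw [hw] at this
          have h' : (-α') • v1 + (1 - β') • v2 = (p 0 + (1 - α') • v1 + (1 - β') • v2) - p 1 := by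
            rw [hv1def, hv2def]; module
          rw [h', this, sub_self]
        obtain ⟨ha, _⟩ := combo_zero hcross h0
        have : α' = 0 := by linarith [neg_eq_zero.1 ha]
        linarith
      · have h0 : (1 - α') • v1 + (-β') • v2 = 0 := by
          have := hi
          rw [hw] at this
          have h' : (1 - α') • v1 + (-β') • v2 = (p 0 + (1 - α') • v1 + (1 - β') • v2) - p 2 := by
            rw [hv1def, hv2def]; module
          rw [h', this, sub_self]
        obtain ⟨_, hb⟩ := combo_zero hcross h0
        have : β' = 0 := by linarith [neg_eq_zero.1 hb]
        linarith
  rw [hcd, ← Int.cast_abs, Int.abs_eq_natAbs, hnat]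
  norm_num

theorem area_triangle_formula (p q : Fin 3 → ℝ × ℝ) (x : Fin 3 → ℝ)
    (hpz : ∀ i, IsLatticePoint (p i)) (haff : AffineIndependent ℝ p)
    (honly : ∀ y ∈ convexHull ℝ (Set.range p), IsLatticePoint y → ∃ i, y = p i)
    (hx : ∀ i, 0 < x i ∧ x i < 1)
    (hpq : ∀ i, p i = (1 - x i) • q (i + 1) + x i • q (i + 2)) :
    (MeasureTheory.volume (convexHull ℝ (Set.range q))).toReal =
      1 / (2 * (x 0 * x 1 * x 2 + (1 - x 0) * (1 - x 1) * (1 - x 2))) := by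
  have hΔ : 0 < x 0 * x 1 * x 2 + (1 - x 0) * (1 - x 1) * (1 - x 2) := by
    have h0 := hx 0; have h1 := hx 1; have h2 := hx 2
    have := mul_pos (mul_pos h0.1 h1.1) h2.1
    have := mul_pos (mul_pos (by linarith [h0.2] : (0:ℝ) < 1 - x 0)
      (by linarith [h1.2] : (0:ℝ) < 1 - x 1)) (by linarith [h2.2] : (0:ℝ) < 1 - x 2)
    linarith
  set Δ : ℝ := x 0 * x 1 * x 2 + (1 - x 0) * (1 - x 1) * (1 - x 2) with hΔdef
  have h0 : p 0 = (1 - x 0) • q 1 + x 0 • q 2 := hpq 0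
  have h1 : p 1 = (1 - x 1) • q 2 + x 1 • q 0 := hpq 1
  have h2 : p 2 = (1 - x 2) • q 0 + x 2 • q 1 := hpq 2
  have hkey : cross (p 1 - p 0) (p 2 - p 0) = Δ * cross (q 1 - q 0) (q 2 - q 0) := by
    simp only [cross, Prod.fst_sub, Prod.snd_sub, h0, h1, h2, Prod.fst_add, Prod.snd_add,
      Prod.smul_fst, Prod.smul_snd, smul_eq_mul, hΔdef]
    ring
  have hcp := cross_ne_zero_of_affineIndependent haff
  have habs := abs_cross_eq_one p hpz hcp honly
  have hq : |cross (q 1 - q 0) (q 2 - q 0)| = 1 / Δ := by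
    rw [hkey, abs_mul, abs_of_pos hΔ] at habs
    field_simp
    linarith [habs]
  rw [volume_triangle q, ENNReal.toReal_ofReal (by positivity), hq]
  field_simp
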